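/- For every probability distribution p on [n] and every real B > 1, there exists a partition of [n] into at most 4B + 1 consecutive intervals such that: (a) every element i ∈ [n] with p(i) > 1/B forms a singleton interval of the partition, and (b) every interval of the partition that is not such a singleton has probability mass p(I) ≤ 3/(2B). -/

import Mathlib

open Finset

private lemma strictMono_cons_aux {K : ℕ} {s : ℕ} {e' : Fin (K + 1) → ℕ}
    (h0 : s < e' 0) (he : StrictMono e') :
    StrictMono (Fin.cons s e' : Fin (K + 2) → ℕ) := by
  rw [Fin.strictMono_iff_lt_succ]
  intro i
  induction i using Fin.cases with
  | zero => simpa using h0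
  | succ j =>
      rw [← Fin.succ_castSucc]
      simpa [Fin.cons_succ] using he (Fin.castSucc_lt_succ (i := j))

private lemma cons_interval_aux {K : ℕ} (s : ℕ) (e' : Fin (K + 1) → ℕ) (j : Fin K) :
    Finset.Ico ((Fin.cons s e' : Fin (K + 2) → ℕ) (Fin.succ j).castSucc)
        ((Fin.cons s e' : Fin (K + 2) → ℕ) (Fin.succ j).succ)
      = Finset.Ico (e' j.castSucc) (e' j.succ) := by
  rw [← Fin.succ_castSucc]
  simp [Fin.cons_succ]

open scoped Classical in
private lemma aux_partition (n : ℕ) (p : ℕ → ℝ) (B : ℝ) (hB : 1 < B)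
    (hp0 : ∀ i ∈ Finset.Ico 1 (n + 1), 0 ≤ p i) :
    ∀ k s, 1 ≤ s → s ≤ n + 1 → n + 1 - s ≤ k →
    ∃ (K : ℕ) (e : Fin (K + 1) → ℕ),
      StrictMono e ∧ e 0 = s ∧ e (Fin.last K) = n + 1 ∧
      (K : ℝ) ≤ 2 * ((Finset.Ico s (n + 1)).filter (fun i => 1 / B < p i)).card
          + 2 * B * (∑ i ∈ Finset.Ico s (n + 1), p i)
          + (if s ≤ n ∧ 1 / B < p s then 0 else 1) ∧
      (∀ i ∈ Finset.Ico s (n + 1), 1 / B < p i →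
        ∃ ℓ : Fin K, Finset.Ico (e ℓ.castSucc) (e ℓ.succ) = {i}) ∧
      (∀ ℓ : Fin K,
        (¬ ∃ i, Finset.Ico (e ℓ.castSucc) (e ℓ.succ) = {i} ∧ 1 / B < p i) →
        (∑ i ∈ Finset.Ico (e ℓ.castSucc) (e ℓ.succ), p i) ≤ 3 / (2 * B)) := by
  have hB0 : (0 : ℝ) < B := lt_trans one_pos hB
  intro k
  induction k with
  | zero =>
      intro s hs1 hsn hk
      have hs : s = n + 1 := by omega
      subst hs
      refine ⟨0, fun _ => n + 1, ?_, rfl, rfl, ?_, ?_, ?_⟩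
      · intro a b hab
        rw [Fin.lt_def] at hab
        have ha := a.isLt; have hb := b.isLt
        omega
      · simp
      · simp
      · intro ℓ; exact ℓ.elim0
  | succ k IH =>
      intro s hs1 hsn hk
      by_cases hse : s = n + 1
      · subst hse
        refine ⟨0, fun _ => n + 1, ?_, rfl, rfl, ?_, ?_, ?_⟩
        · intro a b hab
          rw [Fin.lt_def] at hab
          have ha := a.isLt; have hb := b.isLt
          omega
        · simp
        · simp
        · intro ℓ; exact ℓ.elim0
      have hsn' : s ≤ n := by omega
      have hsum_split : ∀ t, s ≤ t → t ≤ n + 1 →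
          ∑ i ∈ Finset.Ico s t, p i + ∑ i ∈ Finset.Ico t (n + 1), p i
            = ∑ i ∈ Finset.Ico s (n + 1), p i :=
        fun t h1 h2 => Finset.sum_Ico_consecutive p h1 h2
      by_cases hheavy : 1 / B < p s
      · -- heavy first element: singleton block {s}
        obtain ⟨K', e', he'mono, he'0, he'last, he'card, he'heavy, he'mass⟩ :=
          IH (s + 1) (by omega) (by omega) (by omega)
        refine ⟨K' + 1, Fin.cons s e', strictMono_cons_aux (by omega) he'mono,
          Fin.cons_zero _ _, ?_, ?_, ?_, ?_⟩
        · rw [← Fin.succ_last, Fin.cons_succ, he'last]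
        · -- cardinality bound
          have hins : Finset.Ico s (n + 1) = insert s (Finset.Ico (s + 1) (n + 1)) := by
            ext x; simp only [Finset.mem_Ico, Finset.mem_insert]; omega
          have hcard : ((Finset.Ico s (n + 1)).filter (fun i => 1 / B < p i)).card
              = ((Finset.Ico (s + 1) (n + 1)).filter (fun i => 1 / B < p i)).card + 1 := by
            rw [hins, Finset.filter_insert, if_pos hheavy,
              Finset.card_insert_of_notMem (by simp)]
          have hsum : ∑ i ∈ Finset.Ico s (n + 1), p i
              = p s + ∑ i ∈ Finset.Ico (s + 1) (n + 1), p i :=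
            Finset.sum_eq_sum_Ico_succ_bot (by omega) p
          have hps : 1 / B ≤ p s := le_of_lt hheavy
          have heps : (if s + 1 ≤ n ∧ 1 / B < p (s + 1) then (0 : ℝ) else 1) ≤ 1 := by
            split_ifs <;> norm_num
          rw [if_pos ⟨hsn', hheavy⟩]
          push_cast [hcard]
          rw [hsum]
          have h1B : 2 * B * (1 / B) = 2 := by field_simp
          nlinarith [he'card, heps]
        · -- heavy singletons
          intro i hi hpi
          rcases eq_or_ne i s with rfl | hne
          · refine ⟨0, ?_⟩
            have h0 : ((0 : Fin (K' + 1)).castSucc : Fin (K' + 2)) = 0 := rfl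
            have h1 : ((0 : Fin (K' + 1)).succ : Fin (K' + 2)) = Fin.succ 0 := rfl
            rw [h0, h1, Fin.cons_zero, Fin.cons_succ, he'0]
            rw [Finset.Ico_add_one_right_eq_Icc, Finset.Icc_self]
          · have hi' : i ∈ Finset.Ico (s + 1) (n + 1) := by
              simp only [Finset.mem_Ico] at hi ⊢; omega
            obtain ⟨ℓ, hℓ⟩ := he'heavy i hi' hpi
            exact ⟨ℓ.succ, by rwa [cons_interval_aux]⟩
        · -- mass bound
          intro ℓ hns
          induction ℓ using Fin.cases with
          | zero =>
              exfalso; apply hns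
              refine ⟨s, ?_, hheavy⟩
              have h0 : ((0 : Fin (K' + 1)).castSucc : Fin (K' + 2)) = 0 := rfl
              have h1 : ((0 : Fin (K' + 1)).succ : Fin (K' + 2)) = Fin.succ 0 := rfl
              rw [h0, h1, Fin.cons_zero, Fin.cons_succ, he'0]
              rw [Finset.Ico_add_one_right_eq_Icc, Finset.Icc_self]
          | succ j =>
              rw [cons_interval_aux]
              exact he'mass j (by rwa [cons_interval_aux] at hns)
      · -- light first element: greedy maximal light block
        set Q : ℕ → Prop := fun t => t ≤ n + 1 ∧ (∀ i ∈ Finset.Ico s t, p i ≤ 1 / B) ∧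
          ∑ i ∈ Finset.Ico s t, p i ≤ 3 / (2 * B) with hQ
        have h13 : (1 : ℝ) / B ≤ 3 / (2 * B) := by
          rw [div_le_div_iff₀ hB0 (by positivity)]; nlinarith
        have hQs1 : Q (s + 1) := by
          refine ⟨by omega, ?_, ?_⟩
          · intro i hi
            have : i = s := by simp only [Finset.mem_Ico] at hi; omega
            subst this; exact le_of_not_gt hheavy
          · rw [Finset.Ico_add_one_right_eq_Icc, Finset.Icc_self, Finset.sum_singleton]
            exact le_trans (le_of_not_gt hheavy) h13
        set t := Nat.findGreatest Q (n + 1) with ht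
        have hQt : Q t := Nat.findGreatest_spec (by omega) hQs1
        have hts : s + 1 ≤ t := Nat.le_findGreatest (by omega) hQs1
        obtain ⟨htn, hlight, hsumblock⟩ := hQt
        obtain ⟨K', e', he'mono, he'0, he'last, he'card, he'heavy, he'mass⟩ :=
          IH t (by omega) htn (by omega)
        -- common facts
        have hfilter_eq : (Finset.Ico s (n + 1)).filter (fun i => 1 / B < p i)
            = (Finset.Ico t (n + 1)).filter (fun i => 1 / B < p i) := by
          rw [← Finset.Ico_union_Ico_eq_Ico (by omega : s ≤ t) htn, Finset.filter_union,
            Finset.filter_false_of_mem (fun i hi => not_lt_of_ge (hlight i hi)),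
            Finset.empty_union]
        have hsum_t : ∑ i ∈ Finset.Ico t (n + 1), p i
            = ∑ i ∈ Finset.Ico s (n + 1), p i - ∑ i ∈ Finset.Ico s t, p i := by
          rw [← hsum_split t (by omega) htn]; ring
        have hblock_nonneg : 0 ≤ ∑ i ∈ Finset.Ico s t, p i :=
          Finset.sum_nonneg fun i hi => hp0 i (by simp only [Finset.mem_Ico] at hi ⊢; omega)
        -- the key counting inequality
        have hKbound : (K' : ℝ) ≤ 2 * ((Finset.Ico s (n + 1)).filter (fun i => 1 / B < p i)).card
            + 2 * B * (∑ i ∈ Finset.Ico s (n + 1), p i) := by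
          rw [hfilter_eq]
          by_cases htlast : t = n + 1
          · -- block reaches the end; then K' = 0
            have hK0 : K' = 0 := by
              by_contra hK0
              have h01 : (0 : Fin (K' + 1)) < Fin.last K' := by
                rw [Fin.lt_iff_val_lt_val]; simpa using Nat.pos_of_ne_zero hK0
              have := he'mono h01
              rw [he'0, he'last, htlast] at this
              exact lt_irrefl _ this
            have hnn : 0 ≤ ∑ i ∈ Finset.Ico s (n + 1), p i :=
              Finset.sum_nonneg fun i hi => hp0 i (by simp only [Finset.mem_Ico] at hi ⊢; omega)
            rw [hK0]
            push_cast
            positivity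
          · have htn' : t ≤ n := by omega
            have hnQ : ¬ Q (t + 1) :=
              Nat.findGreatest_is_greatest (n := n + 1) (by omega) (by omega)
            have hsplit1 : Finset.Ico s (t + 1) = insert t (Finset.Ico s t) := by
              ext x; simp only [Finset.mem_Ico, Finset.mem_insert]; omega
            by_cases hth : 1 / B < p t
            · -- next element heavy: recursive call starts heavy, ε' = 0
              have heps0 : (if t ≤ n ∧ 1 / B < p t then (0:ℝ) else 1) = 0 :=
                if_pos ⟨htn', hth⟩
              rw [heps0, add_zero] at he'card
              calc (K' : ℝ) ≤ _ := he'card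
                _ ≤ _ := by rw [hsum_t]; nlinarith
            · -- block was closed because of mass: block mass > 1/(2B)
              have hmass_big : 1 / (2 * B) < ∑ i ∈ Finset.Ico s t, p i := by
                have : ¬ (∑ i ∈ Finset.Ico s (t + 1), p i ≤ 3 / (2 * B)) := by
                  intro hcon
                  apply hnQ
                  refine ⟨by omega, ?_, hcon⟩
                  intro i hi
                  simp only [Finset.mem_Ico] at hi
                  rcases eq_or_ne i t with rfl | hne
                  · exact le_of_not_gt hth
                  · exact hlight i (by simp only [Finset.mem_Ico]; omega)
                push_neg at this
                rw [hsplit1, Finset.sum_insert (by simp)] at this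
                have hpt : p t ≤ 1 / B := le_of_not_gt hth
                have : 3 / (2 * B) - 1 / B < ∑ i ∈ Finset.Ico s t, p i := by linarith
                have hEq : 3 / (2 * B) - 1 / B = 1 / (2 * B) := by field_simp; ring
                linarith [hEq ▸ this]
              have heps1 : (if t ≤ n ∧ 1 / B < p t then (0:ℝ) else 1) ≤ 1 := by
                split_ifs <;> norm_num
              have h2B : 2 * B * (1 / (2 * B)) = 1 := by field_simp
              calc (K' : ℝ) ≤ 2 * ((Finset.Ico t (n + 1)).filter (fun i => 1 / B < p i)).card
                    + 2 * B * (∑ i ∈ Finset.Ico t (n + 1), p i) + 1 := by linarith [he'card]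
                _ ≤ _ := by rw [hsum_t]; nlinarith
        -- build the partition
        refine ⟨K' + 1, Fin.cons s e', strictMono_cons_aux (by omega) he'mono,
          Fin.cons_zero _ _, ?_, ?_, ?_, ?_⟩
        · rw [← Fin.succ_last, Fin.cons_succ, he'last]
        · rw [if_neg (by tauto)]
          push_cast
          linarith [hKbound]
        · intro i hi hpi
          have hi' : i ∈ Finset.Ico t (n + 1) := by
            simp only [Finset.mem_Ico] at hi ⊢
            constructor
            · by_contra hcon
              push_neg at hcon
              exact absurd (hlight i (by simp only [Finset.mem_Ico]; omega)) (not_le_of_gt hpi)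
            · omega
          obtain ⟨ℓ, hℓ⟩ := he'heavy i hi' hpi
          exact ⟨ℓ.succ, by rwa [cons_interval_aux]⟩
        · intro ℓ hns
          induction ℓ using Fin.cases with
          | zero =>
              have h0 : ((0 : Fin (K' + 1)).castSucc : Fin (K' + 2)) = 0 := rfl
              have h1 : ((0 : Fin (K' + 1)).succ : Fin (K' + 2)) = Fin.succ 0 := rfl
              rw [h0, h1, Fin.cons_zero, Fin.cons_succ, he'0]
              exact hsumblock
          | succ j =>
              rw [cons_interval_aux]
              exact he'mass j (by rwa [cons_interval_aux] at hns)

/-- For every probability distribution `p` on `[n] = {1, …, n}` and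
every real `B > 1`, there is a partition of `[n]` into `K ≤ 4B + 1` consecutive
intervals (given by breakpoints `1 = e 0 < e 1 < ⋯ < e K = n + 1`) such that every
element of mass greater than `1/B` forms a singleton interval of the partition, and
every interval that is not such a heavy singleton has mass at most `3/(2B)`. -/
theorem exists_equitable_partition
    (n : ℕ) (hn : 0 < n) (p : ℕ → ℝ)
    (hp0 : ∀ i ∈ Finset.Icc 1 n, 0 ≤ p i) (hp1 : ∑ i ∈ Finset.Icc 1 n, p i = 1)
    (B : ℝ) (hB : 1 < B) :
    ∃ (K : ℕ) (e : Fin (K + 1) → ℕ),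
      StrictMono e ∧ e 0 = 1 ∧ e (Fin.last K) = n + 1 ∧
      (K : ℝ) ≤ 4 * B + 1 ∧
      (∀ i ∈ Finset.Icc 1 n, 1 / B < p i →
        ∃ ℓ : Fin K, Finset.Ico (e ℓ.castSucc) (e ℓ.succ) = {i}) ∧
      (∀ ℓ : Fin K,
        (¬ ∃ i, Finset.Ico (e ℓ.castSucc) (e ℓ.succ) = {i} ∧ 1 / B < p i) →
        (∑ i ∈ Finset.Ico (e ℓ.castSucc) (e ℓ.succ), p i) ≤ 3 / (2 * B)) := by
  classical
  have hB0 : (0 : ℝ) < B := lt_trans one_pos hB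
  have hIcc : Finset.Ico 1 (n + 1) = Finset.Icc 1 n := Finset.Ico_add_one_right_eq_Icc 1 n
  have hp0' : ∀ i ∈ Finset.Ico 1 (n + 1), 0 ≤ p i := by rw [hIcc]; exact hp0
  obtain ⟨K, e, hmono, h0, hlast, hcard, hheavy, hmass⟩ :=
    aux_partition n p B hB hp0' (n + 1 - 1) 1 le_rfl (by omega) le_rfl
  refine ⟨K, e, hmono, h0, hlast, ?_, by rw [hIcc] at hheavy; exact hheavy, hmass⟩
  -- count bound
  have hfilt_le : (((Finset.Ico 1 (n + 1)).filter (fun i => 1 / B < p i)).card : ℝ) ≤ B := by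
    set F := (Finset.Ico 1 (n + 1)).filter (fun i => 1 / B < p i) with hF
    have h1 : (F.card : ℝ) * (1 / B) ≤ ∑ i ∈ F, p i := by
      have := Finset.card_nsmul_le_sum F p (1 / B)
        (fun i hi => le_of_lt (Finset.mem_filter.mp hi).2)
      simpa [nsmul_eq_mul] using this
    have h2 : ∑ i ∈ F, p i ≤ ∑ i ∈ Finset.Ico 1 (n + 1), p i :=
      Finset.sum_le_sum_of_subset_of_nonneg (Finset.filter_subset _ _)
        (fun i hi _ => hp0' i hi)
    rw [hIcc, hp1] at h2
    have h3 : (F.card : ℝ) * (1 / B) ≤ 1 := le_trans h1 h2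
    calc (F.card : ℝ) = (F.card : ℝ) * (1 / B) * B := by field_simp
      _ ≤ 1 * B := by
          apply mul_le_mul_of_nonneg_right h3 (le_of_lt hB0)
      _ = B := one_mul B
  have hsum1 : ∑ i ∈ Finset.Ico 1 (n + 1), p i = 1 := by rw [hIcc]; exact hp1
  rw [hsum1] at hcard
  have heps : (if 1 ≤ n ∧ 1 / B < p 1 then (0:ℝ) else 1) ≤ 1 := by split_ifs <;> norm_num
  calc (K : ℝ) ≤ _ := hcard
    _ ≤ 4 * B + 1 := by nlinarith [hfilt_le, heps]
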